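/- The determinant of the leading principal 3×3 submatrix of U(ε) equals (1/u₄₄)·(3ε + 2c·((1 − ε/c)^{3/2} − 1)). -/

import Mathlib

/-- The symmetric 4×4 matrix `U(ε)` with diagonal entries `u i` and off-diagonal
entries `√(u i · u j · (1 − ε/c))`. -/
noncomputable def Umat (u : Fin 4 → ℝ) (c ε : ℝ) : Matrix (Fin 4) (Fin 4) ℝ :=
  Matrix.of fun i j => if i = j then u i else Real.sqrt (u i * u j * (1 - ε / c))

/-- The determinant of the leading principal 3×3 submatrix of `U(ε)` equals
`(1/u₄₄) · (3ε + 2c·((1 − ε/c)^{3/2} − 1))`, where `^` is the real power. -/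
theorem Umat_det_three (u : Fin 4 → ℝ) (hu : ∀ i, 0 < u i)
    (c ε : ℝ) (hc : c = u 0 * u 1 * u 2 * u 3)
    (hε0 : 0 ≤ ε) (hεc : ε ≤ c) :
    Matrix.det
      ((Umat u c ε).submatrix
        (Fin.castLE (show 3 ≤ 4 by norm_num))
        (Fin.castLE (show 3 ≤ 4 by norm_num)))
      = (1 / u 3) * (3 * ε + 2 * c * ((1 - ε / c) ^ ((3 : ℝ) / 2) - 1)) := by
  have hc0 : 0 < c := by rw [hc]; have := hu 0; have := hu 1; have := hu 2; have := hu 3; positivity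
  set t : ℝ := 1 - ε / c with ht
  have ht0 : 0 ≤ t := by
    have : ε / c ≤ 1 := (div_le_one hc0).2 hεc
    simp [ht]; linarith
  have hεt : ε = c * (1 - t) := by
    rw [ht]; field_simp; ring
  have key : ∀ i j : Fin 4, Real.sqrt (u i * u j * t)
      = Real.sqrt (u i) * Real.sqrt (u j) * Real.sqrt t := by
    intro i j
    rw [Real.sqrt_mul (mul_nonneg (hu i).le (hu j).le),
      Real.sqrt_mul (hu i).le]
  have hrt : t ^ ((3:ℝ)/2) = Real.sqrt t ^ 3 := by
    rw [Real.sqrt_eq_rpow, ← Real.rpow_natCast (t ^ ((1:ℝ)/2)) 3,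
      ← Real.rpow_mul ht0]
    norm_num
  rw [Matrix.det_fin_three]
  simp only [Matrix.submatrix_apply, Umat, Matrix.of_apply,
    show (Fin.castLE (show (3:ℕ) ≤ 4 by norm_num) 0 : Fin 4) = 0 from rfl,
    show (Fin.castLE (show (3:ℕ) ≤ 4 by norm_num) 1 : Fin 4) = 1 from rfl,
    show (Fin.castLE (show (3:ℕ) ≤ 4 by norm_num) 2 : Fin 4) = 2 from rfl]
  rw [← ht]
  norm_num [Fin.ext_iff, key, hrt]
  set a := Real.sqrt (u 0) with ha
  set b := Real.sqrt (u 1) with hb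
  set d := Real.sqrt (u 2) with hd
  set r := Real.sqrt t with hr
  have h0 : u 0 = a ^ 2 := (Real.sq_sqrt (hu 0).le).symm
  have h1 : u 1 = b ^ 2 := (Real.sq_sqrt (hu 1).le).symm
  have h2 : u 2 = d ^ 2 := (Real.sq_sqrt (hu 2).le).symm
  have htr : t = r ^ 2 := (Real.sq_sqrt ht0).symm
  rw [hεt, hc, htr, h0, h1, h2]
  have h3 : u 3 ≠ 0 := (hu 3).ne'
  field_simp
  ring
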